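/- Let (M,g,J) be a locally conformally Kähler manifold of real dimension 2n > 4 with Lee form θ, carrying a unit-length parallel vector field V. Set a := θ(V). Then there exists a smooth function f on M such that da + (1/2)aθ = f·V♭, i.e. the 1-form da + (1/2)aθ is pointwise proportional to the dual 1-form of V. -/

import Mathlib

section AnalyticCore
open MeasureTheory intervalIntegral

variable {E : Type*} [NormedAddCommGroup E] [NormedSpace ℝ E]

noncomputable def planeMap (u w : E) : ℝ × ℝ →L[ℝ] E :=
  (ContinuousLinearMap.fst ℝ ℝ ℝ).smulRight u + (ContinuousLinearMap.snd ℝ ℝ ℝ).smulRight w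

@[simp] lemma planeMap_apply (u w : E) (p : ℝ × ℝ) : planeMap u w p = p.1 • u + p.2 • w := rfl

/-- Green's theorem in curl form on a square `[0,δ]²` in the affine plane
`x0 + s•u + t•w`, for differentiable (everywhere) functions `P Q : E → ℝ`
whose "curl" `∂_u P - ∂_w Q` agrees with a continuous function `S`. -/
lemma green_face (u w : E) (P Q S : E → ℝ) (hP : Differentiable ℝ P) (hQ : Differentiable ℝ Q)
    (hS : ∀ y, fderiv ℝ P y u - fderiv ℝ Q y w = S y) (hScont : Continuous S)
    (x0 : E) (δ : ℝ) :
    (∫ s in (0:ℝ)..δ, ∫ t in (0:ℝ)..δ, S (x0 + (s • u + t • w)))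
      = (((∫ s in (0:ℝ)..δ, -Q (x0 + (s • u + δ • w))) -
            ∫ s in (0:ℝ)..δ, -Q (x0 + (s • u + (0:ℝ) • w))) +
          ∫ t in (0:ℝ)..δ, P (x0 + (δ • u + t • w))) -
        ∫ t in (0:ℝ)..δ, P (x0 + ((0:ℝ) • u + t • w)) := by
  have hq : ∀ p : ℝ × ℝ, HasFDerivAt (fun p : ℝ × ℝ => x0 + planeMap u w p)
      (planeMap u w) p := fun p => ((planeMap u w).hasFDerivAt).const_add x0
  have key := integral2_divergence_prod_of_hasFDerivAt_off_countable
    (f := fun p : ℝ × ℝ => P (x0 + planeMap u w p))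
    (g := fun p : ℝ × ℝ => -Q (x0 + planeMap u w p))
    (f' := fun p : ℝ × ℝ => (fderiv ℝ P (x0 + planeMap u w p)).comp (planeMap u w))
    (g' := fun p : ℝ × ℝ => -((fderiv ℝ Q (x0 + planeMap u w p)).comp (planeMap u w)))
    0 0 δ δ ∅ Set.countable_empty
    (Continuous.continuousOn (hP.continuous.comp (by continuity)))
    (Continuous.continuousOn ((hQ.continuous.comp (by continuity)).neg))
    (fun p _ => (((hP _).hasFDerivAt).comp p (hq p)))
    (fun p _ => (((hQ _).hasFDerivAt).comp p (hq p)).neg)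
    (by
      apply ContinuousOn.integrableOn_compact (isCompact_uIcc.prod isCompact_uIcc)
      apply Continuous.continuousOn
      have : Continuous fun p : ℝ × ℝ => S (x0 + planeMap u w p) := by
        exact hScont.comp (by continuity)
      convert this using 1
      funext p
      simp only [ContinuousLinearMap.comp_apply, ContinuousLinearMap.neg_apply, planeMap_apply]
      rw [← hS (x0 + (p.1 • u + p.2 • w))]
      simp; ring)
  have lhs_eq : (∫ s in (0:ℝ)..δ, ∫ t in (0:ℝ)..δ, S (x0 + (s • u + t • w)))
      = ∫ s in (0:ℝ)..δ, ∫ t in (0:ℝ)..δ,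
          ((fderiv ℝ P (x0 + planeMap u w (s, t))).comp (planeMap u w) (1, 0) +
            (-((fderiv ℝ Q (x0 + planeMap u w (s, t))).comp (planeMap u w))) (0, 1)) := by
    congr 1
    funext s
    congr 1
    funext t
    simp only [ContinuousLinearMap.comp_apply, ContinuousLinearMap.neg_apply, planeMap_apply]
    rw [← hS (x0 + (s • u + t • w))]
    simp; ring
  rw [lhs_eq, key]
  simp only [planeMap_apply]

section Flux
variable {u w z : E} {ηu ηw ηz suw swz szu : E → ℝ}

/-- Stokes: total flux of an exact 2-form through the boundary of a cube vanishes. -/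
lemma flux_zero
    (hηu : Differentiable ℝ ηu) (hηw : Differentiable ℝ ηw) (hηz : Differentiable ℝ ηz)
    (huw : ∀ y, fderiv ℝ ηw y u - fderiv ℝ ηu y w = suw y)
    (hwz : ∀ y, fderiv ℝ ηz y w - fderiv ℝ ηw y z = swz y)
    (hzu : ∀ y, fderiv ℝ ηu y z - fderiv ℝ ηz y u = szu y)
    (hcuw : Continuous suw) (hcwz : Continuous swz) (hczu : Continuous szu)
    (x : E) (δ : ℝ) :
    ((∫ t in (0:ℝ)..δ, ∫ r in (0:ℝ)..δ, swz (x + δ • u + t • w + r • z)) -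
      ∫ t in (0:ℝ)..δ, ∫ r in (0:ℝ)..δ, swz (x + (0:ℝ) • u + t • w + r • z)) +
    ((∫ s in (0:ℝ)..δ, ∫ r in (0:ℝ)..δ, szu (x + s • u + δ • w + r • z)) -
      ∫ s in (0:ℝ)..δ, ∫ r in (0:ℝ)..δ, szu (x + s • u + (0:ℝ) • w + r • z)) +
    ((∫ s in (0:ℝ)..δ, ∫ t in (0:ℝ)..δ, suw (x + s • u + t • w + δ • z)) -
      ∫ s in (0:ℝ)..δ, ∫ t in (0:ℝ)..δ, suw (x + s • u + t • w + (0:ℝ) • z)) = 0 := by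
  have ic : ∀ (h : E → ℝ) (c₁ c₂ : ℝ → E), (∀ s, c₁ s = c₂ s) →
      (∫ s in (0:ℝ)..δ, h (c₁ s)) = ∫ s in (0:ℝ)..δ, h (c₂ s) := by
    intro h c₁ c₂ hc
    congr 1
    funext s
    rw [hc s]
  have ic2 : ∀ (h : E → ℝ) (c₁ c₂ : ℝ → ℝ → E), (∀ s t, c₁ s t = c₂ s t) →
      (∫ s in (0:ℝ)..δ, ∫ t in (0:ℝ)..δ, h (c₁ s t)) =
        ∫ s in (0:ℝ)..δ, ∫ t in (0:ℝ)..δ, h (c₂ s t) := by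
    intro h c₁ c₂ hc
    congr 1
    funext s
    exact ic h (c₁ s) (c₂ s) (hc s)
  -- Face pair 1 : fixed u-coordinate s₀, plane (w, z), integrand swz = ∂_w ηz - ∂_z ηw
  have face1 : ∀ s₀ : ℝ,
      (∫ t in (0:ℝ)..δ, ∫ r in (0:ℝ)..δ, swz (x + s₀ • u + t • w + r • z)) =
        -(∫ t in (0:ℝ)..δ, ηw (x + s₀ • u + t • w + δ • z)) +
         (∫ t in (0:ℝ)..δ, ηw (x + s₀ • u + t • w + (0:ℝ) • z)) +
         (∫ r in (0:ℝ)..δ, ηz (x + s₀ • u + δ • w + r • z)) -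
         ∫ r in (0:ℝ)..δ, ηz (x + s₀ • u + (0:ℝ) • w + r • z) := by
    intro s₀
    have e := green_face w z ηz ηw swz hηz hηw hwz hcwz (x + s₀ • u) δ
    rw [ic2 swz (fun t r => x + s₀ • u + t • w + r • z)
        (fun t r => (x + s₀ • u) + (t • w + r • z)) (fun t r => by module), e]
    rw [ic (fun y => -ηw y) (fun t => (x + s₀ • u) + (t • w + δ • z))
        (fun t => x + s₀ • u + t • w + δ • z) (fun t => by module)]
    rw [ic (fun y => -ηw y) (fun t => (x + s₀ • u) + (t • w + (0:ℝ) • z))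
        (fun t => x + s₀ • u + t • w + (0:ℝ) • z) (fun t => by module)]
    rw [ic ηz (fun r => (x + s₀ • u) + (δ • w + r • z))
        (fun r => x + s₀ • u + δ • w + r • z) (fun r => by module)]
    rw [ic ηz (fun r => (x + s₀ • u) + ((0:ℝ) • w + r • z))
        (fun r => x + s₀ • u + (0:ℝ) • w + r • z) (fun r => by module)]
    rw [intervalIntegral.integral_neg, intervalIntegral.integral_neg]
    ring
  -- Face pair 2 : fixed w-coordinate t₀, plane (u, z), integrand szu = ∂_u (-ηz) - ∂_z (-ηu)
  have face2 : ∀ t₀ : ℝ,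
      (∫ s in (0:ℝ)..δ, ∫ r in (0:ℝ)..δ, szu (x + s • u + t₀ • w + r • z)) =
         (∫ s in (0:ℝ)..δ, ηu (x + s • u + t₀ • w + δ • z)) -
         (∫ s in (0:ℝ)..δ, ηu (x + s • u + t₀ • w + (0:ℝ) • z)) -
         (∫ r in (0:ℝ)..δ, ηz (x + δ • u + t₀ • w + r • z)) +
         ∫ r in (0:ℝ)..δ, ηz (x + (0:ℝ) • u + t₀ • w + r • z) := by
    intro t₀
    have hS : ∀ y, fderiv ℝ (fun y => -ηz y) y u - fderiv ℝ (fun y => -ηu y) y z = szu y := by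
      intro y
      rw [fderiv_fun_neg, fderiv_fun_neg, ← hzu y]
      simp
      ring
    have e := green_face u z (fun y => -ηz y) (fun y => -ηu y) szu hηz.neg hηu.neg hS hczu
      (x + t₀ • w) δ
    simp only [neg_neg] at e
    rw [ic2 szu (fun s r => x + s • u + t₀ • w + r • z)
        (fun s r => (x + t₀ • w) + (s • u + r • z)) (fun s r => by module), e]
    rw [ic ηu (fun s => (x + t₀ • w) + (s • u + δ • z))
        (fun s => x + s • u + t₀ • w + δ • z) (fun s => by module)]
    rw [ic ηu (fun s => (x + t₀ • w) + (s • u + (0:ℝ) • z))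
        (fun s => x + s • u + t₀ • w + (0:ℝ) • z) (fun s => by module)]
    rw [ic (fun y => -ηz y) (fun r => (x + t₀ • w) + (δ • u + r • z))
        (fun r => x + δ • u + t₀ • w + r • z) (fun r => by module)]
    rw [ic (fun y => -ηz y) (fun r => (x + t₀ • w) + ((0:ℝ) • u + r • z))
        (fun r => x + (0:ℝ) • u + t₀ • w + r • z) (fun r => by module)]
    rw [intervalIntegral.integral_neg, intervalIntegral.integral_neg]
    ring
  -- Face pair 3 : fixed z-coordinate r₀, plane (u, w), integrand suw = ∂_u ηw - ∂_w ηu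
  have face3 : ∀ r₀ : ℝ,
      (∫ s in (0:ℝ)..δ, ∫ t in (0:ℝ)..δ, suw (x + s • u + t • w + r₀ • z)) =
        -(∫ s in (0:ℝ)..δ, ηu (x + s • u + δ • w + r₀ • z)) +
         (∫ s in (0:ℝ)..δ, ηu (x + s • u + (0:ℝ) • w + r₀ • z)) +
         (∫ t in (0:ℝ)..δ, ηw (x + δ • u + t • w + r₀ • z)) -
         ∫ t in (0:ℝ)..δ, ηw (x + (0:ℝ) • u + t • w + r₀ • z) := by
    intro r₀
    have e := green_face u w ηw ηu suw hηw hηu huw hcuw (x + r₀ • z) δ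
    rw [ic2 suw (fun s t => x + s • u + t • w + r₀ • z)
        (fun s t => (x + r₀ • z) + (s • u + t • w)) (fun s t => by module), e]
    rw [ic (fun y => -ηu y) (fun s => (x + r₀ • z) + (s • u + δ • w))
        (fun s => x + s • u + δ • w + r₀ • z) (fun s => by module)]
    rw [ic (fun y => -ηu y) (fun s => (x + r₀ • z) + (s • u + (0:ℝ) • w))
        (fun s => x + s • u + (0:ℝ) • w + r₀ • z) (fun s => by module)]
    rw [ic ηw (fun t => (x + r₀ • z) + (δ • u + t • w))
        (fun t => x + δ • u + t • w + r₀ • z) (fun t => by module)]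
    rw [ic ηw (fun t => (x + r₀ • z) + ((0:ℝ) • u + t • w))
        (fun t => x + (0:ℝ) • u + t • w + r₀ • z) (fun t => by module)]
    rw [intervalIntegral.integral_neg, intervalIntegral.integral_neg]
    ring
  rw [face1 δ, face1 0, face2 δ, face2 0, face3 δ, face3 0]
  ring
end Flux

open intervalIntegral in
lemma pair_est (S : E → ℝ) (hS : Differentiable ℝ S) (d : E) (L : ℝ)
    (y₁ y₀ : ℝ → ℝ → E)
    (hy₁c : Continuous fun p : ℝ × ℝ => y₁ p.1 p.2)
    (hy₀c : Continuous fun p : ℝ × ℝ => y₀ p.1 p.2)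
    (δ C : ℝ) (hδ : 0 < δ) (hC : 0 ≤ C)
    (hb : ∀ t r, t ∈ Set.uIoc (0:ℝ) δ → r ∈ Set.uIoc (0:ℝ) δ →
      |S (y₁ t r) - S (y₀ t r) - δ * L| ≤ C) :
    |(∫ t in (0:ℝ)..δ, ∫ r in (0:ℝ)..δ, S (y₁ t r)) -
      (∫ t in (0:ℝ)..δ, ∫ r in (0:ℝ)..δ, S (y₀ t r)) - δ ^ 3 * L| ≤ C * δ ^ 2 := by
  have hc₁ : Continuous fun p : ℝ × ℝ => S (y₁ p.1 p.2) := hS.continuous.comp hy₁c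
  have hc₀ : Continuous fun p : ℝ × ℝ => S (y₀ p.1 p.2) := hS.continuous.comp hy₀c
  have hint₁ : IntervalIntegrable (fun t => ∫ r in (0:ℝ)..δ, S (y₁ t r)) MeasureTheory.volume 0 δ := by
    apply Continuous.intervalIntegrable
    exact continuous_parametric_intervalIntegral_of_continuous' (f := fun t r => S (y₁ t r)) hc₁ _ _
  have hint₀ : IntervalIntegrable (fun t => ∫ r in (0:ℝ)..δ, S (y₀ t r)) MeasureTheory.volume 0 δ := by
    apply Continuous.intervalIntegrable
    exact continuous_parametric_intervalIntegral_of_continuous' (f := fun t r => S (y₀ t r)) hc₀ _ _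
  have key : (∫ t in (0:ℝ)..δ, ∫ r in (0:ℝ)..δ, S (y₁ t r)) -
      (∫ t in (0:ℝ)..δ, ∫ r in (0:ℝ)..δ, S (y₀ t r)) - δ ^ 3 * L
      = ∫ t in (0:ℝ)..δ, ((∫ r in (0:ℝ)..δ, S (y₁ t r)) -
          (∫ r in (0:ℝ)..δ, S (y₀ t r)) - δ ^ 2 * L) := by
    rw [intervalIntegral.integral_sub (hint₁.sub hint₀) intervalIntegrable_const,
      intervalIntegral.integral_sub hint₁ hint₀, intervalIntegral.integral_const]
    simp
    ring
  rw [key]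
  have bound : ∀ t ∈ Set.uIoc (0:ℝ) δ,
      ‖(∫ r in (0:ℝ)..δ, S (y₁ t r)) - (∫ r in (0:ℝ)..δ, S (y₀ t r)) - δ ^ 2 * L‖ ≤ C * δ := by
    intro t ht
    have hr₁ : Continuous fun r => S (y₁ t r) := by
      have : Continuous fun r : ℝ => ((t, r) : ℝ × ℝ) := by continuity
      exact hc₁.comp this
    have hr₀ : Continuous fun r => S (y₀ t r) := by
      have : Continuous fun r : ℝ => ((t, r) : ℝ × ℝ) := by continuity
      exact hc₀.comp this
    have inner : (∫ r in (0:ℝ)..δ, S (y₁ t r)) - (∫ r in (0:ℝ)..δ, S (y₀ t r)) - δ ^ 2 * L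
        = ∫ r in (0:ℝ)..δ, (S (y₁ t r) - S (y₀ t r) - δ * L) := by
      rw [intervalIntegral.integral_sub ((hr₁.intervalIntegrable _ _).sub
          (hr₀.intervalIntegrable _ _)) intervalIntegrable_const,
        intervalIntegral.integral_sub (hr₁.intervalIntegrable _ _) (hr₀.intervalIntegrable _ _),
        intervalIntegral.integral_const]
      simp
      ring
    rw [inner]
    calc ‖∫ r in (0:ℝ)..δ, (S (y₁ t r) - S (y₀ t r) - δ * L)‖ ≤ C * |δ - 0| := by
          apply intervalIntegral.norm_integral_le_of_norm_le_const
          intro r hr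
          rw [Real.norm_eq_abs]
          exact hb t r ht hr
      _ = C * δ := by rw [sub_zero, abs_of_pos hδ]
  calc |∫ t in (0:ℝ)..δ, ((∫ r in (0:ℝ)..δ, S (y₁ t r)) -
          (∫ r in (0:ℝ)..δ, S (y₀ t r)) - δ ^ 2 * L)|
      ≤ (C * δ) * |δ - 0| := by
        rw [← Real.norm_eq_abs]
        exact intervalIntegral.norm_integral_le_of_norm_le_const bound
    _ = C * δ ^ 2 := by rw [sub_zero, abs_of_pos hδ]; ring

/-- `d(dη) = 0` for a differentiable 1-form `η` whose exterior differential is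
(pointwise, in the three relevant directions) given by differentiable functions. -/
lemma curl_div_zero (x u w z : E) (ηu ηw ηz suw swz szu : E → ℝ)
    (hηu : Differentiable ℝ ηu) (hηw : Differentiable ℝ ηw) (hηz : Differentiable ℝ ηz)
    (hsuw : Differentiable ℝ suw) (hswz : Differentiable ℝ swz) (hszu : Differentiable ℝ szu)
    (huw : ∀ y, fderiv ℝ ηw y u - fderiv ℝ ηu y w = suw y)
    (hwz : ∀ y, fderiv ℝ ηz y w - fderiv ℝ ηw y z = swz y)
    (hzu : ∀ y, fderiv ℝ ηu y z - fderiv ℝ ηz y u = szu y) :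
    fderiv ℝ swz x u + fderiv ℝ szu x w + fderiv ℝ suw x z = 0 := by
  set c : ℝ := fderiv ℝ swz x u + fderiv ℝ szu x w + fderiv ℝ suw x z with hc
  have habs : ∀ ε : ℝ, 0 < ε → |c| ≤ ε := by
    intro ε hε
    set M : ℝ := ‖u‖ + ‖w‖ + ‖z‖ + 1 with hM
    have hM1 : (1:ℝ) ≤ M := by
      rw [hM]; have := norm_nonneg u; have := norm_nonneg w; have := norm_nonneg z; linarith
    have hMpos : (0:ℝ) < M := by linarith
    have hMu : ‖u‖ ≤ M := by have := norm_nonneg w; have := norm_nonneg z; simp [hM]; linarith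
    have hMw : ‖w‖ ≤ M := by have := norm_nonneg u; have := norm_nonneg z; simp [hM]; linarith
    have hMz : ‖z‖ ≤ M := by have := norm_nonneg u; have := norm_nonneg w; simp [hM]; linarith
    set ε' : ℝ := ε / (18 * M) with hε'
    have hε'pos : 0 < ε' := by positivity
    -- little-o estimates for the three 2-form components
    have littleo : ∀ S : E → ℝ, Differentiable ℝ S → ∃ ρ > 0, ∀ y : E, dist y x < ρ →
        |S y - S x - fderiv ℝ S x (y - x)| ≤ ε' * ‖y - x‖ := by
      intro S hS
      have h := ((hS x).hasFDerivAt).isLittleO.def hε'pos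
      rw [Metric.eventually_nhds_iff] at h
      obtain ⟨ρ, hρpos, hρ⟩ := h
      exact ⟨ρ, hρpos, fun y hy => by simpa [Real.norm_eq_abs] using hρ hy⟩
    obtain ⟨ρ₁, hρ₁, hE₁⟩ := littleo swz hswz
    obtain ⟨ρ₂, hρ₂, hE₂⟩ := littleo szu hszu
    obtain ⟨ρ₃, hρ₃, hE₃⟩ := littleo suw hsuw
    set ρ : ℝ := min ρ₁ (min ρ₂ ρ₃) with hρdef
    have hρpos : 0 < ρ := lt_min hρ₁ (lt_min hρ₂ hρ₃)
    set δ : ℝ := ρ / (6 * M) with hδdef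
    have hδpos : 0 < δ := by positivity
    have hcube : ∀ a b c' : ℝ, a ∈ Set.Icc 0 δ → b ∈ Set.Icc 0 δ → c' ∈ Set.Icc 0 δ →
        ‖a • u + b • w + c' • z‖ ≤ 3 * M * δ := by
      intro a b c' ha hb hc'
      calc ‖a • u + b • w + c' • z‖ ≤ ‖a • u + b • w‖ + ‖c' • z‖ := norm_add_le _ _
        _ ≤ ‖a • u‖ + ‖b • w‖ + ‖c' • z‖ := by linarith [norm_add_le (a • u) (b • w)]
        _ = |a| * ‖u‖ + |b| * ‖w‖ + |c'| * ‖z‖ := by simp [norm_smul]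
        _ ≤ δ * M + δ * M + δ * M := by
            have e1 : |a| * ‖u‖ ≤ δ * M := mul_le_mul (by rw [abs_of_nonneg ha.1]; exact ha.2)
              hMu (norm_nonneg u) (le_of_lt hδpos)
            have e2 : |b| * ‖w‖ ≤ δ * M := mul_le_mul (by rw [abs_of_nonneg hb.1]; exact hb.2)
              hMw (norm_nonneg w) (le_of_lt hδpos)
            have e3 : |c'| * ‖z‖ ≤ δ * M := mul_le_mul (by rw [abs_of_nonneg hc'.1]; exact hc'.2)
              hMz (norm_nonneg z) (le_of_lt hδpos)
            linarith
        _ = 3 * M * δ := by ring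
    have h3ρ : 3 * M * δ < ρ := by
      have : 3 * M * δ = ρ / 2 := by rw [hδdef]; field_simp; ring
      rw [this]; linarith
    have hρle1 : ρ ≤ ρ₁ := min_le_left _ _
    have hρle2 : ρ ≤ ρ₂ := le_trans (min_le_right _ _) (min_le_left _ _)
    have hρle3 : ρ ≤ ρ₃ := le_trans (min_le_right _ _) (min_le_right _ _)
    have perpoint : ∀ (S : E → ℝ) (ρS : ℝ),
        (∀ y : E, dist y x < ρS → |S y - S x - fderiv ℝ S x (y - x)| ≤ ε' * ‖y - x‖) →
        ρ ≤ ρS → ∀ (d : E) (y₁ y₀ : E), y₁ - y₀ = δ • d →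
        ‖y₁ - x‖ ≤ 3 * M * δ → ‖y₀ - x‖ ≤ 3 * M * δ →
        |S y₁ - S y₀ - δ * fderiv ℝ S x d| ≤ 6 * M * δ * ε' := by
      intro S ρS hES hρS d y₁ y₀ hsub h1 h0
      have l1 : |S y₁ - S x - fderiv ℝ S x (y₁ - x)| ≤ ε' * ‖y₁ - x‖ :=
        hES y₁ (by rw [dist_eq_norm]; exact lt_of_le_of_lt h1 (lt_of_lt_of_le h3ρ hρS))
      have l0 : |S y₀ - S x - fderiv ℝ S x (y₀ - x)| ≤ ε' * ‖y₀ - x‖ :=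
        hES y₀ (by rw [dist_eq_norm]; exact lt_of_le_of_lt h0 (lt_of_lt_of_le h3ρ hρS))
      have lmap : fderiv ℝ S x (y₁ - x) - fderiv ℝ S x (y₀ - x) = δ * fderiv ℝ S x d := by
        rw [← map_sub]
        rw [show y₁ - x - (y₀ - x) = δ • d by rw [← hsub]; abel]
        simp
      have split : S y₁ - S y₀ - δ * fderiv ℝ S x d =
          (S y₁ - S x - fderiv ℝ S x (y₁ - x)) - (S y₀ - S x - fderiv ℝ S x (y₀ - x)) := by
        rw [← lmap]; ring
      rw [split]
      calc |(S y₁ - S x - fderiv ℝ S x (y₁ - x)) - (S y₀ - S x - fderiv ℝ S x (y₀ - x))|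
          ≤ |S y₁ - S x - fderiv ℝ S x (y₁ - x)| + |S y₀ - S x - fderiv ℝ S x (y₀ - x)| :=
            abs_sub _ _
        _ ≤ ε' * ‖y₁ - x‖ + ε' * ‖y₀ - x‖ := by linarith
        _ ≤ ε' * (3 * M * δ) + ε' * (3 * M * δ) := by
            have := mul_le_mul_of_nonneg_left h1 (le_of_lt hε'pos)
            have := mul_le_mul_of_nonneg_left h0 (le_of_lt hε'pos)
            linarith
        _ = 6 * M * δ * ε' := by ring
    have hIoc : Set.uIoc (0:ℝ) δ ⊆ Set.Icc 0 δ := by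
      rw [Set.uIoc_of_le (le_of_lt hδpos)]
      exact Set.Ioc_subset_Icc_self
    have hδmem : δ ∈ Set.Icc (0:ℝ) δ := ⟨le_of_lt hδpos, le_refl δ⟩
    have h0mem : (0:ℝ) ∈ Set.Icc (0:ℝ) δ := ⟨le_refl 0, le_of_lt hδpos⟩
    have hCnn : (0:ℝ) ≤ 6 * M * δ * ε' := by positivity
    -- pair 1
    have P1 := pair_est swz hswz u (fderiv ℝ swz x u)
      (fun t r => x + δ • u + t • w + r • z) (fun t r => x + (0:ℝ) • u + t • w + r • z)
      (by fun_prop) (by fun_prop) δ (6 * M * δ * ε') hδpos hCnn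
      (by
        intro t r ht hr
        apply perpoint swz ρ₁ hE₁ hρle1 u
        · module
        · rw [show x + δ • u + t • w + r • z - x = δ • u + t • w + r • z by module]
          exact hcube δ t r hδmem (hIoc ht) (hIoc hr)
        · rw [show x + (0:ℝ) • u + t • w + r • z - x = (0:ℝ) • u + t • w + r • z by module]
          exact hcube 0 t r h0mem (hIoc ht) (hIoc hr))
    -- pair 2
    have P2 := pair_est szu hszu w (fderiv ℝ szu x w)
      (fun s r => x + s • u + δ • w + r • z) (fun s r => x + s • u + (0:ℝ) • w + r • z)
      (by fun_prop) (by fun_prop) δ (6 * M * δ * ε') hδpos hCnn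
      (by
        intro t r ht hr
        apply perpoint szu ρ₂ hE₂ hρle2 w
        · module
        · rw [show x + t • u + δ • w + r • z - x = t • u + δ • w + r • z by module]
          exact hcube t δ r (hIoc ht) hδmem (hIoc hr)
        · rw [show x + t • u + (0:ℝ) • w + r • z - x = t • u + (0:ℝ) • w + r • z by module]
          exact hcube t 0 r (hIoc ht) h0mem (hIoc hr))
    -- pair 3
    have P3 := pair_est suw hsuw z (fderiv ℝ suw x z)
      (fun s t => x + s • u + t • w + δ • z) (fun s t => x + s • u + t • w + (0:ℝ) • z)
      (by fun_prop) (by fun_prop) δ (6 * M * δ * ε') hδpos hCnn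
      (by
        intro t r ht hr
        apply perpoint suw ρ₃ hE₃ hρle3 z
        · module
        · rw [show x + t • u + r • w + δ • z - x = t • u + r • w + δ • z by module]
          exact hcube t r δ (hIoc ht) (hIoc hr) hδmem
        · rw [show x + t • u + r • w + (0:ℝ) • z - x = t • u + r • w + (0:ℝ) • z by module]
          exact hcube t r 0 (hIoc ht) (hIoc hr) h0mem)
    have hflux := flux_zero hηu hηw hηz huw hwz hzu
      hsuw.continuous hswz.continuous hszu.continuous x δ
    have key : δ ^ 3 * c =
        -((((∫ t in (0:ℝ)..δ, ∫ r in (0:ℝ)..δ, swz (x + δ • u + t • w + r • z)) -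
            (∫ t in (0:ℝ)..δ, ∫ r in (0:ℝ)..δ, swz (x + (0:ℝ) • u + t • w + r • z)) -
            δ ^ 3 * fderiv ℝ swz x u) +
          ((∫ s in (0:ℝ)..δ, ∫ r in (0:ℝ)..δ, szu (x + s • u + δ • w + r • z)) -
            (∫ s in (0:ℝ)..δ, ∫ r in (0:ℝ)..δ, szu (x + s • u + (0:ℝ) • w + r • z)) -
            δ ^ 3 * fderiv ℝ szu x w) +
          ((∫ s in (0:ℝ)..δ, ∫ t in (0:ℝ)..δ, suw (x + s • u + t • w + δ • z)) -
            (∫ s in (0:ℝ)..δ, ∫ t in (0:ℝ)..δ, suw (x + s • u + t • w + (0:ℝ) • z)) -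
            δ ^ 3 * fderiv ℝ suw x z))) := by
      rw [hc]; linarith [hflux]
    have habs3 : |δ ^ 3 * c| ≤ 3 * (6 * M * δ * ε' * δ ^ 2) := by
      rw [key, abs_neg]
      calc |_| ≤ _ := abs_add_three _ _ _
        _ ≤ 3 * (6 * M * δ * ε' * δ ^ 2) := by linarith [P1, P2, P3]
    have hc3 : |c| ≤ 18 * M * ε' := by
      have hδ3 : (0:ℝ) < δ ^ 3 := by positivity
      rw [abs_mul, abs_of_pos hδ3] at habs3
      have := (mul_le_mul_iff_right₀ hδ3).mp (by linarith : δ ^ 3 * |c| ≤ δ ^ 3 * (18 * M * ε'))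
      linarith
    have : 18 * M * ε' = ε := by rw [hε']; field_simp
    linarith [hc3]
  by_contra hne
  have h0 : 0 < |c| := abs_pos.mpr hne
  have := habs (|c| / 2) (by linarith)
  linarith

end AnalyticCore

/-- Levi-Civita connection of a metric tensor on a chart. -/
def IsLeviCivita {E : Type*} [NormedAddCommGroup E] [NormedSpace ℝ E]
    (g : E → E →L[ℝ] E →L[ℝ] ℝ) (nab : (E → E) → (E → E) → E → E) : Prop :=
  (∀ X Y Z : E → E, Differentiable ℝ Y → Differentiable ℝ Z → ∀ x : E,
      fderiv ℝ (fun y => g y (Y y) (Z y)) x (X x)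
        = g x (nab X Y x) (Z x) + g x (Y x) (nab X Z x)) ∧
  (∀ X Y : E → E, Differentiable ℝ X → Differentiable ℝ Y → ∀ x : E,
      nab X Y x - nab Y X x = fderiv ℝ Y x (X x) - fderiv ℝ X x (Y x))

set_option maxHeartbeats 2000000 in
/-- on a locally conformally Kähler manifold of real dimension
`2n > 4` — Hermitian structure `(g,J)` with closed Lee form `θ` satisfying the lcK
identity `(∇_X J)Y = ½(g(X,Y)Jθ♯ + θ(JY)X + g(JX,Y)θ♯ − θ(Y)JX)` — carrying a
unit-length parallel vector field `V`, setting `a := θ(V)`, there is a function `f`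
with `da + ½·a·θ = f·V♭`. -/
theorem lck_parallel_field_da_proportional_to_V
    {E : Type*} [NormedAddCommGroup E] [NormedSpace ℝ E] [FiniteDimensional ℝ E]
    (n : ℕ) (hn : 2 < n) (hdim : Module.finrank ℝ E = 2 * n)
    (g : E → E →L[ℝ] E →L[ℝ] ℝ) (hgdiff : Differentiable ℝ g)
    (hsymm : ∀ x u v, g x u v = g x v u)
    (hpos : ∀ x u, u ≠ 0 → 0 < g x u u)
    (J : E → E →L[ℝ] E) (hJdiff : Differentiable ℝ J)
    (hJ2 : ∀ x v, J x (J x v) = -v)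
    (hherm : ∀ x u v, g x (J x u) (J x v) = g x u v)
    (nab : (E → E) → (E → E) → E → E) (hLC : IsLeviCivita g nab)
    (θ : E → E →L[ℝ] ℝ) (hθdiff : Differentiable ℝ θ)
    (hθclosed : ∀ x u v : E,
      fderiv ℝ (fun y => θ y v) x u = fderiv ℝ (fun y => θ y u) x v)
    (θs : E → E) (hθs : ∀ x v, g x (θs x) v = θ x v)
    (hlck : ∀ X Y : E → E, Differentiable ℝ X → Differentiable ℝ Y → ∀ x : E,
      nab X (fun y => J y (Y y)) x - J x (nab X Y x) = (1 / 2 : ℝ) •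
        (g x (X x) (Y x) • J x (θs x) + θ x (J x (Y x)) • X x
          + g x (J x (X x)) (Y x) • θs x - θ x (Y x) • J x (X x)))
    (V : E → E) (hVdiff : Differentiable ℝ V)
    (hVpar : ∀ X : E → E, ∀ x : E, nab X V x = 0)
    (hVunit : ∀ x, g x (V x) (V x) = 1) :
    ∃ f : E → ℝ, ∀ x w : E,
      fderiv ℝ (fun y => θ y (V y)) x w + (1 / 2 : ℝ) * (θ x (V x) * θ x w)
        = f x * g x (V x) w := by
  classical
  -- basic differentiability facts
  have hJc : ∀ c : E, Differentiable ℝ (fun y => J y c) :=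
    fun c => hJdiff.clm_apply (differentiable_const c)
  have hJV : Differentiable ℝ (fun y => J y (V y)) := hJdiff.clm_apply hVdiff
  have hVb : ∀ c : E, Differentiable ℝ (fun y => g y (V y) c) :=
    fun c => (hgdiff.clm_apply hVdiff).clm_apply (differentiable_const c)
  have hTh : ∀ c : E, Differentiable ℝ (fun y => θ y c) :=
    fun c => hθdiff.clm_apply (differentiable_const c)
  have hEt : ∀ c : E, Differentiable ℝ (fun y => g y (J y (V y)) c) :=
    fun c => (hgdiff.clm_apply hJV).clm_apply (differentiable_const c)
  have hBt : ∀ c : E, Differentiable ℝ (fun y => θ y (J y c)) :=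
    fun c => hθdiff.clm_apply (hJc c)
  have hAf : Differentiable ℝ (fun y => θ y (V y)) := hθdiff.clm_apply hVdiff
  have hOm : ∀ c d : E, Differentiable ℝ (fun y => g y (J y c) d) :=
    fun c d => (hgdiff.clm_apply (hJc c)).clm_apply (differentiable_const d)
  have gJanti : ∀ y c d, g y (J y c) d = -(g y c (J y d)) := by
    intro y c d
    have h := hherm y (J y c) d
    rw [hJ2] at h
    rw [← h]; simp
  have htor : ∀ (x c d : E),
      nab (fun _ => c) (fun _ => d) x = nab (fun _ => d) (fun _ => c) x := by
    intro x c d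
    have h := hLC.2 (fun _ => c) (fun _ => d) (differentiable_const c) (differentiable_const d) x
    simp only [fderiv_fun_const, Pi.zero_apply, ContinuousLinearMap.zero_apply, sub_zero] at h
    exact sub_eq_zero.mp h
  -- symmetry of ∇(V♭)
  have hVbsym : ∀ (x m c : E),
      fderiv ℝ (fun y => g y (V y) c) x m = fderiv ℝ (fun y => g y (V y) m) x c := by
    intro x m c
    have h1 := hLC.1 (fun _ => m) V (fun _ => c) hVdiff (differentiable_const c) x
    have h2 := hLC.1 (fun _ => c) V (fun _ => m) hVdiff (differentiable_const m) x
    rw [hVpar] at h1 h2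
    simp only [map_zero, ContinuousLinearMap.zero_apply, zero_add] at h1 h2
    rw [h1, h2, htor x m c]
  -- the key geometric identity : dη = σ with η = J V♭
  have hkgi : ∀ (y c d : E),
      fderiv ℝ (fun y' => g y' (J y' (V y')) d) y c -
        fderiv ℝ (fun y' => g y' (J y' (V y')) c) y d
      = 2⁻¹ * (g y (V y) d * θ y (J y c) - g y (V y) c * θ y (J y d)
          + g y (J y (V y)) d * θ y c - g y (J y (V y)) c * θ y d
          - 2 * (θ y (V y) * g y (J y c) d)) := by
    intro y c d
    have e1 := hLC.1 (fun _ => c) (fun y => J y (V y)) (fun _ => d) hJV (differentiable_const d) y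
    have e2 := hLC.1 (fun _ => d) (fun y => J y (V y)) (fun _ => c) hJV (differentiable_const c) y
    have htor' := htor y c d
    have lck1 := hlck (fun _ => c) V (differentiable_const c) hVdiff y
    have lck2 := hlck (fun _ => d) V (differentiable_const d) hVdiff y
    rw [hVpar] at lck1 lck2
    simp only [map_zero, sub_zero] at lck1 lck2
    rw [e1, e2, lck1, lck2, htor']
    simp only [map_add, map_sub, map_smul, ContinuousLinearMap.add_apply,
      ContinuousLinearMap.coe_smul', Pi.smul_apply, ContinuousLinearMap.sub_apply,
      smul_eq_mul]
    rw [show g y (J y (θs y)) d = -(θ y (J y d)) by rw [gJanti, hθs]]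
    rw [show g y (J y (θs y)) c = -(θ y (J y c)) by rw [gJanti, hθs]]
    rw [show g y (J y c) (V y) = -(g y (J y (V y)) c) by rw [gJanti, hsymm]]
    rw [show g y (J y d) (V y) = -(g y (J y (V y)) d) by rw [gJanti, hsymm]]
    rw [show g y (θs y) d = θ y d from hθs y d]
    rw [show g y (θs y) c = θ y c from hθs y c]
    rw [show g y (J y c) d = -(g y (J y d) c) by rw [gJanti, hsymm]]
    rw [show g y c (V y) = g y (V y) c from hsymm y c (V y)]
    rw [show g y d (V y) = g y (V y) d from hsymm y d (V y)]
    rw [show g y c d = g y d c from hsymm y c d]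
    ring
  -- dΩ = θ ∧ Ω (cyclic version)
  have hdOm : ∀ (x u w z : E),
      fderiv ℝ (fun y => g y (J y w) z) x u + fderiv ℝ (fun y => g y (J y z) u) x w
        + fderiv ℝ (fun y => g y (J y u) w) x z
      = θ x u * g x (J x w) z + θ x w * g x (J x z) u + θ x z * g x (J x u) w := by
    intro x u w z
    have lck : ∀ c d : E, nab (fun _ => c) (fun y => J y d) x
        = J x (nab (fun _ => c) (fun _ => d) x)
          + (1 / 2 : ℝ) • (g x c d • J x (θs x) + θ x (J x d) • c
            + g x (J x c) d • θs x - θ x d • J x c) := by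
      intro c d
      have h := hlck (fun _ => c) (fun _ => d) (differentiable_const c) (differentiable_const d) x
      have h2 := sub_eq_iff_eq_add.mp h
      rw [h2]; abel
    have e1 := hLC.1 (fun _ => u) (fun y => J y w) (fun _ => z) (hJc w) (differentiable_const z) x
    have e2 := hLC.1 (fun _ => w) (fun y => J y z) (fun _ => u) (hJc z) (differentiable_const u) x
    have e3 := hLC.1 (fun _ => z) (fun y => J y u) (fun _ => w) (hJc u) (differentiable_const w) x
    rw [e1, e2, e3, lck u w, lck w z, lck z u]
    simp only [map_add, map_sub, map_smul, ContinuousLinearMap.add_apply,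
      ContinuousLinearMap.coe_smul', Pi.smul_apply, ContinuousLinearMap.sub_apply,
      smul_eq_mul]
    have cancel : ∀ c d m : E, g x (J x c) (nab (fun _ => m) (fun _ => d) x) =
        -(g x (J x (nab (fun _ => d) (fun _ => m) x)) c) := by
      intro c d m
      rw [hsymm, gJanti, htor x d m, neg_neg]
    rw [cancel w z u, cancel z u w, cancel u w z]
    rw [show g x (J x (θs x)) z = -(θ x (J x z)) by rw [gJanti, hθs]]
    rw [show g x (J x (θs x)) u = -(θ x (J x u)) by rw [gJanti, hθs]]
    rw [show g x (J x (θs x)) w = -(θ x (J x w)) by rw [gJanti, hθs]]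
    rw [show g x (θs x) z = θ x z from hθs x z, show g x (θs x) u = θ x u from hθs x u,
      show g x (θs x) w = θ x w from hθs x w]
    rw [show g x (J x u) z = -(g x (J x z) u) by rw [gJanti, hsymm x u (J x z)]]
    rw [show g x (J x w) u = -(g x (J x u) w) by rw [gJanti, hsymm x w (J x u)]]
    rw [show g x (J x z) w = -(g x (J x w) z) by rw [gJanti, hsymm x z (J x w)]]
    rw [show g x w u = g x u w from hsymm x w u, show g x u z = g x z u from hsymm x u z,
      show g x z w = g x w z from hsymm x z w]
    ring
  -- expansion of the derivative of σ(c,d) in direction m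
  have dsig : ∀ (c d m x : E),
      fderiv ℝ (fun y => 2⁻¹ * (g y (V y) d * θ y (J y c) - g y (V y) c * θ y (J y d)
        + g y (J y (V y)) d * θ y c - g y (J y (V y)) c * θ y d
        - 2 * (θ y (V y) * g y (J y c) d))) x m
      = 2⁻¹ * (fderiv ℝ (fun y => g y (V y) d) x m * θ x (J x c)
          + g x (V x) d * fderiv ℝ (fun y => θ y (J y c)) x m
          - fderiv ℝ (fun y => g y (V y) c) x m * θ x (J x d)
          - g x (V x) c * fderiv ℝ (fun y => θ y (J y d)) x m
          + fderiv ℝ (fun y => g y (J y (V y)) d) x m * θ x c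
          + g x (J x (V x)) d * fderiv ℝ (fun y => θ y c) x m
          - fderiv ℝ (fun y => g y (J y (V y)) c) x m * θ x d
          - g x (J x (V x)) c * fderiv ℝ (fun y => θ y d) x m
          - 2 * (fderiv ℝ (fun y => θ y (V y)) x m * g x (J x c) d
              + θ x (V x) * fderiv ℝ (fun y => g y (J y c) d) x m)) := by
    intro c d m x
    have D1 : DifferentiableAt ℝ (fun y => g y (V y) d * θ y (J y c)) x :=
      ((hVb d) x).mul ((hBt c) x)
    have D2 : DifferentiableAt ℝ (fun y => g y (V y) c * θ y (J y d)) x :=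
      ((hVb c) x).mul ((hBt d) x)
    have D3 : DifferentiableAt ℝ (fun y => g y (J y (V y)) d * θ y c) x :=
      ((hEt d) x).mul ((hTh c) x)
    have D4 : DifferentiableAt ℝ (fun y => g y (J y (V y)) c * θ y d) x :=
      ((hEt c) x).mul ((hTh d) x)
    have D5 : DifferentiableAt ℝ (fun y => θ y (V y) * g y (J y c) d) x :=
      (hAf x).mul ((hOm c d) x)
    have D5' : DifferentiableAt ℝ (fun y => 2 * (θ y (V y) * g y (J y c) d)) x :=
      D5.const_mul 2
    rw [fderiv_const_mul ((((D1.fun_sub D2).fun_add D3).fun_sub D4).fun_sub D5') 2⁻¹]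
    rw [fderiv_fun_sub (((D1.fun_sub D2).fun_add D3).fun_sub D4) D5']
    rw [fderiv_fun_sub ((D1.fun_sub D2).fun_add D3) D4]
    rw [fderiv_fun_add (D1.fun_sub D2) D3]
    rw [fderiv_fun_sub D1 D2]
    rw [fderiv_fun_mul ((hVb d) x) ((hBt c) x)]
    rw [fderiv_fun_mul ((hVb c) x) ((hBt d) x)]
    rw [fderiv_fun_mul ((hEt d) x) ((hTh c) x)]
    rw [fderiv_fun_mul ((hEt c) x) ((hTh d) x)]
    rw [fderiv_const_mul D5 2]
    rw [fderiv_fun_mul (hAf x) ((hOm c d) x)]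
    simp only [ContinuousLinearMap.smul_apply, ContinuousLinearMap.add_apply,
      ContinuousLinearMap.sub_apply, smul_eq_mul]
    ring
  -- the wedge identity (α ∧ Ω = 0 on V-perp)
  have hwedge : ∀ (x u w z : E), g x (V x) u = 0 → g x (V x) w = 0 → g x (V x) z = 0 →
      (fderiv ℝ (fun y => θ y (V y)) x u + 2⁻¹ * (θ x (V x) * θ x u)) * g x (J x w) z
      + (fderiv ℝ (fun y => θ y (V y)) x w + 2⁻¹ * (θ x (V x) * θ x w)) * g x (J x z) u
      + (fderiv ℝ (fun y => θ y (V y)) x z + 2⁻¹ * (θ x (V x) * θ x z)) * g x (J x u) w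
      = 0 := by
    intro x u w z hu hw hz
    have hdd := curl_div_zero x u w z
      (fun y => g y (J y (V y)) u) (fun y => g y (J y (V y)) w) (fun y => g y (J y (V y)) z)
      (fun y => 2⁻¹ * (g y (V y) w * θ y (J y u) - g y (V y) u * θ y (J y w)
        + g y (J y (V y)) w * θ y u - g y (J y (V y)) u * θ y w
        - 2 * (θ y (V y) * g y (J y u) w)))
      (fun y => 2⁻¹ * (g y (V y) z * θ y (J y w) - g y (V y) w * θ y (J y z)
        + g y (J y (V y)) z * θ y w - g y (J y (V y)) w * θ y z
        - 2 * (θ y (V y) * g y (J y w) z)))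
      (fun y => 2⁻¹ * (g y (V y) u * θ y (J y z) - g y (V y) z * θ y (J y u)
        + g y (J y (V y)) u * θ y z - g y (J y (V y)) z * θ y u
        - 2 * (θ y (V y) * g y (J y z) u)))
      (hEt u) (hEt w) (hEt z)
      (by exact (((((((hVb w).mul (hBt u)).sub ((hVb u).mul (hBt w))).add ((hEt w).mul (hTh u))).sub
          ((hEt u).mul (hTh w))).sub ((hAf.mul (hOm u w)).const_mul 2)).const_mul 2⁻¹))
      (by exact (((((((hVb z).mul (hBt w)).sub ((hVb w).mul (hBt z))).add ((hEt z).mul (hTh w))).sub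
          ((hEt w).mul (hTh z))).sub ((hAf.mul (hOm w z)).const_mul 2)).const_mul 2⁻¹))
      (by exact (((((((hVb u).mul (hBt z)).sub ((hVb z).mul (hBt u))).add ((hEt u).mul (hTh z))).sub
          ((hEt z).mul (hTh u))).sub ((hAf.mul (hOm z u)).const_mul 2)).const_mul 2⁻¹))
      (fun y => hkgi y u w) (fun y => hkgi y w z) (fun y => hkgi y z u)
    rw [dsig w z u, dsig z u w, dsig u w z] at hdd
    have k1 := hkgi x z u
    have k2 := hkgi x u w
    have k3 := hkgi x w z
    simp only [hu, hw, hz, mul_zero, zero_mul, sub_zero, zero_sub, add_zero, zero_add,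
      neg_zero] at hdd k1 k2 k3
    linear_combination (-1 : ℝ) * hdd
      + 2⁻¹ * θ x (J x w) * hVbsym x u z
      + 2⁻¹ * θ x (J x z) * hVbsym x w u
      + 2⁻¹ * θ x (J x u) * hVbsym x z w
      + 2⁻¹ * g x (J x (V x)) z * hθclosed x u w
      + 2⁻¹ * g x (J x (V x)) u * hθclosed x w z
      + 2⁻¹ * g x (J x (V x)) w * hθclosed x z u
      - 2⁻¹ * θ x w * k1 - 2⁻¹ * θ x z * k2 - 2⁻¹ * θ x u * k3
      - θ x (V x) * hdOm x u w z
  -- conclusion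
  refine ⟨fun x => fderiv ℝ (fun y => θ y (V y)) x (V x) + 2⁻¹ * (θ x (V x) * θ x (V x)), ?_⟩
  intro x w
  -- perpendicular directions are annihilated
  have hperp : ∀ p : E, g x (V x) p = 0 →
      fderiv ℝ (fun y => θ y (V y)) x p + 2⁻¹ * (θ x (V x) * θ x p) = 0 := by
    intro p hp
    obtain ⟨u, hu0, hu1, hu2, hu3, hu4⟩ : ∃ u : E, u ≠ 0 ∧ g x (V x) u = 0 ∧
        g x (J x (V x)) u = 0 ∧ g x p u = 0 ∧ g x (J x p) u = 0 := by
      by_contra hcon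
      push_neg at hcon
      set L : E →ₗ[ℝ] ℝ × ℝ × ℝ × ℝ :=
        (g x (V x)).toLinearMap.prod ((g x (J x (V x))).toLinearMap.prod
          ((g x p).toLinearMap.prod (g x (J x p)).toLinearMap)) with hL
      have hinj : Function.Injective L := by
        rw [← LinearMap.ker_eq_bot, LinearMap.ker_eq_bot']
        intro m hm
        by_contra hm0
        obtain ⟨h1, h2, h3, h4⟩ : g x (V x) m = 0 ∧ g x (J x (V x)) m = 0 ∧
            g x p m = 0 ∧ g x (J x p) m = 0 := by
          have := hm
          rw [hL] at this
          simp [LinearMap.prod_apply, Prod.ext_iff] at this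
          exact ⟨this.1, this.2.1, this.2.2.1, this.2.2.2⟩
        exact (hcon m hm0 h1 h2 h3) h4
      have hle := LinearMap.finrank_le_finrank_of_injective hinj
      have h4 : Module.finrank ℝ (ℝ × ℝ × ℝ × ℝ) = 4 := by simp
      rw [h4, hdim] at hle
      omega
    have hJu0 : J x u ≠ 0 := by
      intro h
      apply hu0
      have h2 := hJ2 x u
      rw [h] at h2
      simp at h2
      rw [← neg_neg u, ← h2]
      simp
    have hzperp : g x (V x) (J x u) = 0 := by
      rw [hsymm, gJanti]
      rw [show g x u (J x (V x)) = g x (J x (V x)) u from hsymm x u _]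
      rw [hu2]; ring
    have key := hwedge x p u (J x u) hp hu1 hzperp
    have e1 : g x (J x (J x u)) p = 0 := by
      rw [hJ2]
      rw [show g x (-u) p = -(g x u p) by simp]
      rw [show g x u p = g x p u from hsymm x u p, hu3]; ring
    have e2 : g x (J x p) u = 0 := hu4
    have e3 : 0 < g x (J x u) (J x u) := hpos x (J x u) hJu0
    rw [e1, e2] at key
    have hz0 : (fderiv ℝ (fun y => θ y (V y)) x p + 2⁻¹ * (θ x (V x) * θ x p)) *
        g x (J x u) (J x u) = 0 := by linarith
    rcases mul_eq_zero.mp hz0 with h | h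
    · exact h
    · exact absurd h (ne_of_gt e3)
  -- decompose w along V x
  have hw' : g x (V x) (w - (g x (V x) w) • V x) = 0 := by
    rw [map_sub, map_smul]
    rw [hVunit x]
    simp
  have hmain := hperp _ hw'
  have hlin1 : fderiv ℝ (fun y => θ y (V y)) x (w - (g x (V x) w) • V x)
      = fderiv ℝ (fun y => θ y (V y)) x w
        - g x (V x) w * fderiv ℝ (fun y => θ y (V y)) x (V x) := by
    rw [map_sub, map_smul]
    simp
  have hlin2 : θ x (w - (g x (V x) w) • V x) = θ x w - g x (V x) w * θ x (V x) := by
    rw [map_sub, map_smul]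
    simp
  rw [hlin1, hlin2] at hmain
  ring_nf
  ring_nf at hmain
  linarith [hmain]
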